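/- Let T : X → Y be a bounded bijective operator between Banach spaces, S_X(t) and S_Y(t) strongly continuous semigroups on X, Y with generators A_X, A_Y. Suppose for each t > 0 there exists T_t ∈ L(X; Y) with S_Y(t) T = T_t S_X(t), and t⁻¹(T_t − T) converges strongly as t → 0⁺ to a bounded operator B : X → Y. Then T maps the domain of A_X bijectively onto the domain of A_Y, and for all ξ ∈ dom(A_Y), A_X T⁻¹ ξ = T⁻¹(A_Y ξ − B T⁻¹ ξ); consequently ‖A_X T⁻¹ ξ‖_X ≤ ‖T⁻¹‖ (‖A_Y ξ‖_Y + ‖B‖ ‖T⁻¹ ξ‖_X). -/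

import Mathlib

open Filter

lemma keyB {X Y : Type*} [NormedAddCommGroup X] [NormedSpace ℝ X] [CompleteSpace X]
    [NormedAddCommGroup Y] [NormedSpace ℝ Y]
    (T : X →L[ℝ] Y) (SX : ℝ → X →L[ℝ] X)
    (hSX0 : SX 0 = ContinuousLinearMap.id ℝ X)
    (hSXcont : ∀ x : X, ContinuousWithinAt (fun t => SX t x) (Set.Ici (0:ℝ)) 0)
    (Tt : ℝ → X →L[ℝ] Y) (B : X →L[ℝ] Y)
    (hB : ∀ x : X, Tendsto (fun t : ℝ => t⁻¹ • (Tt t x - T x))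
      (nhdsWithin 0 (Set.Ioi 0)) (nhds (B x))) (x : X) :
    Tendsto (fun t : ℝ => t⁻¹ • (Tt t (SX t x) - T (SX t x)))
      (nhdsWithin 0 (Set.Ioi 0)) (nhds (B x)) := by
  rw [tendsto_iff_seq_tendsto]
  intro u hu
  set g : ℕ → X →L[ℝ] Y := fun n => (u n)⁻¹ • (Tt (u n) - T) with hg
  have hgx : ∀ z : X, Tendsto (fun n => g n z) atTop (nhds (B z)) := by
    intro z
    have := (hB z).comp hu
    simpa [g, Function.comp_def] using this
  have hbd : ∀ z : X, ∃ C, ∀ n, ‖g n z‖ ≤ C := by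
    intro z
    obtain ⟨C, hC⟩ := (hgx z).norm.bddAbove_range
    exact ⟨C, fun n => hC ⟨n, rfl⟩⟩
  obtain ⟨C, hC⟩ := banach_steinhaus hbd
  have hSxu : Tendsto (fun n => SX (u n) x - x) atTop (nhds 0) := by
    have h1 : Tendsto (fun t => SX t x) (nhdsWithin 0 (Set.Ici 0)) (nhds x) := by
      have h := hSXcont x
      simpa [ContinuousWithinAt, hSX0] using h
    have h2 := h1.mono_left (nhdsWithin_mono _ Set.Ioi_subset_Ici_self)
    have h3 : Tendsto (fun n => SX (u n) x) atTop (nhds x) := h2.comp hu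
    simpa using h3.sub_const x
  have hzero : Tendsto (fun n => g n (SX (u n) x - x)) atTop (nhds 0) := by
    refine squeeze_zero_norm (a := fun n => C * ‖SX (u n) x - x‖) (fun n => ?_) ?_
    · calc ‖g n (SX (u n) x - x)‖ ≤ ‖g n‖ * ‖SX (u n) x - x‖ :=
            (g n).le_opNorm _
        _ ≤ C * ‖SX (u n) x - x‖ :=
            mul_le_mul_of_nonneg_right (hC n) (norm_nonneg _)
    · simpa using tendsto_const_nhds.mul hSxu.norm
  have hmain : Tendsto (fun n => g n (SX (u n) x)) atTop (nhds (B x)) := by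
    have h := (hgx x).add hzero
    have heq : (fun n => g n x + g n (SX (u n) x - x)) = fun n => g n (SX (u n) x) := by
      funext n; rw [map_sub]; abel
    rw [heq] at h; simpa using h
  have : (fun n => (u n)⁻¹ • (Tt (u n) (SX (u n) x) - T (SX (u n) x)))
      = fun n => g n (SX (u n) x) := by
    funext n; simp [g]
  rw [show ((fun t : ℝ => t⁻¹ • (Tt t (SX t x) - T (SX t x))) ∘ u)
      = fun n => (u n)⁻¹ • (Tt (u n) (SX (u n) x) - T (SX (u n) x)) from rfl, this]
  exact hmain

lemma keyBack {X Y : Type*} [NormedAddCommGroup X] [NormedSpace ℝ X] [CompleteSpace X]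
    [NormedAddCommGroup Y] [NormedSpace ℝ Y]
    (T : X →L[ℝ] Y) (Tinv : Y →L[ℝ] X) (hTl : ∀ x, Tinv (T x) = x)
    (SX : ℝ → X →L[ℝ] X) (SY : ℝ → Y →L[ℝ] Y)
    (hSX0 : SX 0 = ContinuousLinearMap.id ℝ X)
    (hSXcont : ∀ x : X, ContinuousWithinAt (fun t => SX t x) (Set.Ici (0:ℝ)) 0)
    (Tt : ℝ → X →L[ℝ] Y)
    (hTt : ∀ t : ℝ, 0 < t → (SY t).comp T = (Tt t).comp (SX t))
    (B : X →L[ℝ] Y)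
    (hB : ∀ x : X, Tendsto (fun t : ℝ => t⁻¹ • (Tt t x - T x))
      (nhdsWithin 0 (Set.Ioi 0)) (nhds (B x)))
    (x : X) (η : Y)
    (hη : Tendsto (fun t : ℝ => t⁻¹ • (SY t (T x) - T x)) (nhdsWithin 0 (Set.Ioi 0)) (nhds η)) :
    Tendsto (fun t : ℝ => t⁻¹ • (SX t x - x)) (nhdsWithin 0 (Set.Ioi 0))
      (nhds (Tinv (η - B x))) := by
  have hK := keyB T SX hSX0 hSXcont Tt B hB x
  have h2 := hη.sub hK
  have h3 : Tendsto (fun t : ℝ => Tinv (t⁻¹ • (SY t (T x) - T x)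
      - t⁻¹ • (Tt t (SX t x) - T (SX t x)))) (nhdsWithin 0 (Set.Ioi 0))
      (nhds (Tinv (η - B x))) :=
    (Tinv.continuous.tendsto _).comp h2
  apply h3.congr'
  filter_upwards [self_mem_nhdsWithin] with t (ht : 0 < t)
  have happ : SY t (T x) = Tt t (SX t x) := by
    have := congrArg (fun f : X →L[ℝ] Y => f x) (hTt t ht)
    simpa using this
  rw [happ, ← smul_sub]
  have : Tt t (SX t x) - T x - (Tt t (SX t x) - T (SX t x)) = T (SX t x - x) := by
    rw [map_sub]; abel
  rw [this, ← map_smul, hTl]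


/-- Banach-space version of "Nirenberg's trick": if `T : X → Y` is bounded and bijective,
`S_X, S_Y` are strongly continuous semigroups intertwined by `S_Y(t) T = T_t S_X(t)` with
`t⁻¹(T_t − T) → B` strongly, then `T` maps `dom A_X` bijectively onto `dom A_Y`, and
`A_X T⁻¹ ξ = T⁻¹ (A_Y ξ − B T⁻¹ ξ)`, with the consequent norm estimate. -/
theorem stmt11 {X Y : Type*} [NormedAddCommGroup X] [NormedSpace ℝ X] [CompleteSpace X]
    [NormedAddCommGroup Y] [NormedSpace ℝ Y] [CompleteSpace Y]
    (T : X →L[ℝ] Y) (Tinv : Y →L[ℝ] X)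
    (hTl : ∀ x, Tinv (T x) = x) (hTr : ∀ y, T (Tinv y) = y)
    (SX : ℝ → X →L[ℝ] X) (SY : ℝ → Y →L[ℝ] Y)
    (hSX0 : SX 0 = ContinuousLinearMap.id ℝ X)
    (hSXadd : ∀ s t : ℝ, 0 ≤ s → 0 ≤ t → SX (s + t) = (SX s).comp (SX t))
    (hSXcont : ∀ x : X, ContinuousWithinAt (fun t => SX t x) (Set.Ici (0 : ℝ)) 0)
    (hSY0 : SY 0 = ContinuousLinearMap.id ℝ Y)
    (hSYadd : ∀ s t : ℝ, 0 ≤ s → 0 ≤ t → SY (s + t) = (SY s).comp (SY t))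
    (hSYcont : ∀ y : Y, ContinuousWithinAt (fun t => SY t y) (Set.Ici (0 : ℝ)) 0)
    (Tt : ℝ → X →L[ℝ] Y)
    (hTt : ∀ t : ℝ, 0 < t → (SY t).comp T = (Tt t).comp (SX t))
    (B : X →L[ℝ] Y)
    (hB : ∀ x : X, Tendsto (fun t : ℝ => t⁻¹ • (Tt t x - T x))
      (nhdsWithin 0 (Set.Ioi 0)) (nhds (B x))) :
    (∀ x : X,
      (∃ ζ, Tendsto (fun t : ℝ => t⁻¹ • (SX t x - x)) (nhdsWithin 0 (Set.Ioi 0)) (nhds ζ)) ↔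
      (∃ η, Tendsto (fun t : ℝ => t⁻¹ • (SY t (T x) - T x)) (nhdsWithin 0 (Set.Ioi 0))
        (nhds η))) ∧
    ∀ ξ η, Tendsto (fun t : ℝ => t⁻¹ • (SY t ξ - ξ)) (nhdsWithin 0 (Set.Ioi 0)) (nhds η) →
      ∃ ζ, Tendsto (fun t : ℝ => t⁻¹ • (SX t (Tinv ξ) - Tinv ξ))
          (nhdsWithin 0 (Set.Ioi 0)) (nhds ζ) ∧
        ζ = Tinv (η - B (Tinv ξ)) ∧
        ‖ζ‖ ≤ ‖Tinv‖ * (‖η‖ + ‖B‖ * ‖Tinv ξ‖) := by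
  constructor
  · intro x
    constructor
    · rintro ⟨ζ, hζ⟩
      refine ⟨B x + T ζ, ?_⟩
      have hK := keyB T SX hSX0 hSXcont Tt B hB x
      have hT : Tendsto (fun t : ℝ => T (t⁻¹ • (SX t x - x))) (nhdsWithin 0 (Set.Ioi 0))
          (nhds (T ζ)) := (T.continuous.tendsto _).comp hζ
      have h := hK.add hT
      apply h.congr'
      filter_upwards [self_mem_nhdsWithin] with t (ht : 0 < t)
      have happ : SY t (T x) = Tt t (SX t x) := by
        have := congrArg (fun f : X →L[ℝ] Y => f x) (hTt t ht)
        simpa using this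
      rw [happ]
      simp only [map_smul, map_sub, smul_sub]
      abel
    · rintro ⟨η, hη⟩
      exact ⟨Tinv (η - B x), keyBack T Tinv hTl SX SY hSX0 hSXcont Tt hTt B hB x η hη⟩
  · intro ξ η hη
    set x := Tinv ξ with hx
    have hη' : Tendsto (fun t : ℝ => t⁻¹ • (SY t (T x) - T x)) (nhdsWithin 0 (Set.Ioi 0))
        (nhds η) := by simpa [hx, hTr] using hη
    refine ⟨Tinv (η - B x), keyBack T Tinv hTl SX SY hSX0 hSXcont Tt hTt B hB x η hη', rfl, ?_⟩
    calc ‖Tinv (η - B x)‖ ≤ ‖Tinv‖ * ‖η - B x‖ := Tinv.le_opNorm _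
      _ ≤ ‖Tinv‖ * (‖η‖ + ‖B x‖) :=
          mul_le_mul_of_nonneg_left ((norm_sub_le _ _)) (norm_nonneg _)
      _ ≤ ‖Tinv‖ * (‖η‖ + ‖B‖ * ‖x‖) :=
          mul_le_mul_of_nonneg_left (add_le_add le_rfl (B.le_opNorm _)) (norm_nonneg _)
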